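/- Let a, b, c be nonnegative real numbers with a + b + c = 1. Then 0 ≤ ab + bc + ca − 2abc ≤ 7/27. -/
import Mathlib

private lemma schur_aux (a b c : ℝ) (ha : 0 ≤ a) (hb : 0 ≤ b) (hc : 0 ≤ c) :
    0 ≤ a*(a-b)*(a-c) + b*(b-a)*(b-c) + c*(c-a)*(c-b) := by
  rcases le_total a b with h1 | h1 <;> rcases le_total b c with h2 | h2 <;>
    rcases le_total a c with h3 | h3 <;>
    nlinarith [mul_nonneg ha hb, mul_nonneg hb hc, mul_nonneg hc ha,
      sq_nonneg (a-b), sq_nonneg (b-c), sq_nonneg (a-c)]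

/-- IMO 1984 Problem 1. Geometrically: for a strictly convex 3-dimensional hypersurface
with constant mean curvature `1/3`, one has `0 ≤ scal - 2K ≤ 7/27`. -/
theorem imo1984_p1 (a b c : ℝ) (ha : 0 ≤ a) (hb : 0 ≤ b) (hc : 0 ≤ c)
    (habc : a + b + c = 1) :
    0 ≤ a * b + b * c + c * a - 2 * (a * b * c) ∧
      a * b + b * c + c * a - 2 * (a * b * c) ≤ 7 / 27 := by
  have hkey : a * b + b * c + c * a - 2 * (a * b * c) =
      a^2*b + a*b^2 + b^2*c + b*c^2 + c^2*a + c*a^2 + a*b*c := by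
    have h : c = 1 - a - b := by linarith
    subst h; ring
  constructor
  · rw [hkey]; positivity
  · have hq : a * b + b * c + c * a ≤ 1 / 3 := by
      nlinarith [sq_nonneg (a-b), sq_nonneg (b-c), sq_nonneg (c-a)]
    have hs := schur_aux a b c ha hb hc
    have hid : a*(a-b)*(a-c) + b*(b-a)*(b-c) + c*(c-a)*(c-b) =
        1 + 9*(a*b*c) - 4*(a*b + b*c + c*a) := by
      have h : c = 1 - a - b := by linarith
      subst h; ring
    rw [hid] at hs
    linarith
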